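/- Let G be an ample groupoid such that G⁰ is σ-compact, and suppose that K ⊆ G⁰ is clopen and G-full. Then the topological groupoids G × ℛ and G|_K × ℛ are isomorphic. -/

import Mathlib

universe u v w

/-- An (algebraic) groupoid structure on a type `G` of arrows.  The multiplication is a total
function, but all axioms involving `mul a b` are only imposed when `a` and `b` are composable,
i.e. when `src a = rng b`.  Units are the common values of `src` and `rng`. -/
structure GroupoidStruct (G : Type u) where
  src : G → G
  rng : G → G
  mul : G → G → G
  inv : G → G
  src_src : ∀ a, src (src a) = src a
  rng_src : ∀ a, rng (src a) = src a
  src_rng : ∀ a, src (rng a) = rng a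
  rng_rng : ∀ a, rng (rng a) = rng a
  mul_assoc : ∀ a b c, src a = rng b → src b = rng c → mul (mul a b) c = mul a (mul b c)
  src_mul : ∀ a b, src a = rng b → src (mul a b) = src b
  rng_mul : ∀ a b, src a = rng b → rng (mul a b) = rng a
  mul_src : ∀ a, mul a (src a) = a
  rng_mul_self : ∀ a, mul (rng a) a = a
  src_inv : ∀ a, src (inv a) = rng a
  rng_inv : ∀ a, rng (inv a) = src a
  mul_inv : ∀ a, mul a (inv a) = rng a
  inv_mul : ∀ a, mul (inv a) a = src a

namespace GroupoidStruct

variable {G : Type u} {H : Type v}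

/-- The unit space `G⁰` of a groupoid. -/
def units (S : GroupoidStruct G) : Set G := {x | S.src x = x ∧ S.rng x = x}

/-- The range map, viewed as a map `G → G⁰`. -/
def rngMap (S : GroupoidStruct G) (g : G) : S.units := ⟨S.rng g, S.src_rng g, S.rng_rng g⟩

/-- The source map, viewed as a map `G → G⁰`. -/
def srcMap (S : GroupoidStruct G) (g : G) : S.units := ⟨S.src g, S.src_src g, S.rng_src g⟩

/-- A topological groupoid: inversion is continuous and multiplication is continuous on the
set of composable pairs. -/
structure IsTopologicalGroupoid [TopologicalSpace G] (S : GroupoidStruct G) : Prop where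
  continuous_inv : Continuous S.inv
  continuousOn_mul :
    ContinuousOn (fun p : G × G => S.mul p.1 p.2) {p : G × G | S.src p.1 = S.rng p.2}

/-- An ample groupoid: a topological groupoid whose topology has a basis of compact open sets,
whose unit space is Hausdorff, and whose range and source maps are local homeomorphisms onto
the unit space. -/
structure IsAmple [TopologicalSpace G] (S : GroupoidStruct G)
    extends IsTopologicalGroupoid S : Prop where
  compact_open_basis : ∃ B : Set (Set G),
    (∀ U ∈ B, IsCompact U ∧ IsOpen U) ∧ TopologicalSpace.IsTopologicalBasis B
  t2_units : T2Space S.units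
  isLocalHomeomorph_rngMap : IsLocalHomeomorph S.rngMap
  isLocalHomeomorph_srcMap : IsLocalHomeomorph S.srcMap

/-- `K ⊆ G⁰` is `G`-full if `r(GK) = G⁰`, where `GK = s⁻¹(K)`. -/
def IsFull (S : GroupoidStruct G) (K : Set G) : Prop := S.rng '' (S.src ⁻¹' K) = S.units

/-- `K` is an open subset of the unit space (in the subspace topology of `G⁰`). -/
def IsUnitOpen [TopologicalSpace G] (S : GroupoidStruct G) (K : Set G) : Prop :=
  K ⊆ S.units ∧ IsOpen {x : S.units | (x : G) ∈ K}

/-- `K` is a clopen subset of the unit space (in the subspace topology of `G⁰`). -/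
def IsUnitClopen [TopologicalSpace G] (S : GroupoidStruct G) (K : Set G) : Prop :=
  K ⊆ S.units ∧ IsClopen {x : S.units | (x : G) ∈ K}

/-- `K` is a compact open subset of the unit space. -/
def IsUnitCompactOpen [TopologicalSpace G] (S : GroupoidStruct G) (K : Set G) : Prop :=
  K ⊆ S.units ∧ IsCompact K ∧ IsOpen {x : S.units | (x : G) ∈ K}

/-- An open bisection: an open set on which both the range and the source map restrict to
homeomorphisms onto their images (i.e. are topological embeddings). -/
def IsOpenBisection [TopologicalSpace G] (S : GroupoidStruct G) (U : Set G) : Prop :=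
  IsOpen U ∧ Topology.IsEmbedding (U.restrict S.rng) ∧ Topology.IsEmbedding (U.restrict S.src)

/-- A compact open bisection. -/
def IsCompactOpenBisection [TopologicalSpace G] (S : GroupoidStruct G) (U : Set G) : Prop :=
  IsCompact U ∧ S.IsOpenBisection U

/-- The product of two groupoids, with coordinatewise operations. -/
def prod (S : GroupoidStruct G) (T : GroupoidStruct H) : GroupoidStruct (G × H) where
  src p := (S.src p.1, T.src p.2)
  rng p := (S.rng p.1, T.rng p.2)
  mul p q := (S.mul p.1 q.1, T.mul p.2 q.2)
  inv p := (S.inv p.1, T.inv p.2)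
  src_src a := Prod.ext_iff.mpr ⟨S.src_src _, T.src_src _⟩
  rng_src a := Prod.ext_iff.mpr ⟨S.rng_src _, T.rng_src _⟩
  src_rng a := Prod.ext_iff.mpr ⟨S.src_rng _, T.src_rng _⟩
  rng_rng a := Prod.ext_iff.mpr ⟨S.rng_rng _, T.rng_rng _⟩
  mul_assoc a b c h1 h2 := by
    obtain ⟨h1a, h1b⟩ := Prod.ext_iff.mp h1
    obtain ⟨h2a, h2b⟩ := Prod.ext_iff.mp h2
    exact Prod.ext_iff.mpr ⟨S.mul_assoc _ _ _ h1a h2a, T.mul_assoc _ _ _ h1b h2b⟩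
  src_mul a b h := by
    obtain ⟨ha, hb⟩ := Prod.ext_iff.mp h
    exact Prod.ext_iff.mpr ⟨S.src_mul _ _ ha, T.src_mul _ _ hb⟩
  rng_mul a b h := by
    obtain ⟨ha, hb⟩ := Prod.ext_iff.mp h
    exact Prod.ext_iff.mpr ⟨S.rng_mul _ _ ha, T.rng_mul _ _ hb⟩
  mul_src a := Prod.ext_iff.mpr ⟨S.mul_src _, T.mul_src _⟩
  rng_mul_self a := Prod.ext_iff.mpr ⟨S.rng_mul_self _, T.rng_mul_self _⟩
  src_inv a := Prod.ext_iff.mpr ⟨S.src_inv _, T.src_inv _⟩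
  rng_inv a := Prod.ext_iff.mpr ⟨S.rng_inv _, T.rng_inv _⟩
  mul_inv a := Prod.ext_iff.mpr ⟨S.mul_inv _, T.mul_inv _⟩
  inv_mul a := Prod.ext_iff.mpr ⟨S.inv_mul _, T.inv_mul _⟩

/-- The full equivalence relation `ℛ = ℕ × ℕ`, regarded as a (discrete, principal) groupoid
with unit space `ℕ`. -/
def Rho : GroupoidStruct (ℕ × ℕ) where
  src p := (p.2, p.2)
  rng p := (p.1, p.1)
  mul p q := (p.1, q.2)
  inv p := (p.2, p.1)
  src_src _ := rfl
  rng_src _ := rfl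
  src_rng _ := rfl
  rng_rng _ := rfl
  mul_assoc _ _ _ _ _ := rfl
  src_mul _ _ _ := rfl
  rng_mul _ _ _ := rfl
  mul_src _ := rfl
  rng_mul_self _ := rfl
  src_inv _ := rfl
  rng_inv _ := rfl
  mul_inv _ := rfl
  inv_mul _ := rfl

/-- An isomorphism of topological groupoids: a homeomorphism of the arrow spaces respecting
all the groupoid operations. -/
structure GroupoidIso [TopologicalSpace G] [TopologicalSpace H]
    (S : GroupoidStruct G) (T : GroupoidStruct H) extends G ≃ₜ H where
  map_mul : ∀ a b, S.src a = S.rng b →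
    toHomeomorph (S.mul a b) = T.mul (toHomeomorph a) (toHomeomorph b)
  map_inv : ∀ a, toHomeomorph (S.inv a) = T.inv (toHomeomorph a)
  map_src : ∀ a, toHomeomorph (S.src a) = T.src (toHomeomorph a)
  map_rng : ∀ a, toHomeomorph (S.rng a) = T.rng (toHomeomorph a)

/-- The arrow space `G|_K = r⁻¹(K) ∩ s⁻¹(K)` of the restriction of `G` to `K ⊆ G⁰`,
with the subspace topology. -/
abbrev Restrict (S : GroupoidStruct G) (K : Set G) : Type u :=
  {g : G // S.rng g ∈ K ∧ S.src g ∈ K}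

variable (S : GroupoidStruct G) (K : Set G)

def rsrc (a : S.Restrict K) : S.Restrict K :=
  ⟨S.src a.1, by rw [S.rng_src]; exact a.2.2, by rw [S.src_src]; exact a.2.2⟩

def rrng (a : S.Restrict K) : S.Restrict K :=
  ⟨S.rng a.1, by rw [S.rng_rng]; exact a.2.1, by rw [S.src_rng]; exact a.2.1⟩

def rinv (a : S.Restrict K) : S.Restrict K :=
  ⟨S.inv a.1, by rw [S.rng_inv]; exact a.2.2, by rw [S.src_inv]; exact a.2.1⟩

open Classical in
noncomputable def rmul (a b : S.Restrict K) : S.Restrict K :=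
  if h : S.src a.1 = S.rng b.1 then
    ⟨S.mul a.1 b.1, by rw [S.rng_mul _ _ h]; exact a.2.1, by rw [S.src_mul _ _ h]; exact b.2.2⟩
  else a

@[simp] lemma rsrc_val (a : S.Restrict K) : (S.rsrc K a).1 = S.src a.1 := rfl
@[simp] lemma rrng_val (a : S.Restrict K) : (S.rrng K a).1 = S.rng a.1 := rfl
@[simp] lemma rinv_val (a : S.Restrict K) : (S.rinv K a).1 = S.inv a.1 := rfl

lemma rmul_val (a b : S.Restrict K) (h : S.src a.1 = S.rng b.1) :
    (S.rmul K a b).1 = S.mul a.1 b.1 := by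
  unfold rmul
  rw [dif_pos h]

/-- The restriction `G|_K` of a groupoid to a subset `K` of its unit space. -/
noncomputable def restrict : GroupoidStruct (S.Restrict K) where
  src := S.rsrc K
  rng := S.rrng K
  mul := S.rmul K
  inv := S.rinv K
  src_src a := Subtype.ext (S.src_src a.1)
  rng_src a := Subtype.ext (S.rng_src a.1)
  src_rng a := Subtype.ext (S.src_rng a.1)
  rng_rng a := Subtype.ext (S.rng_rng a.1)
  mul_assoc a b c h1 h2 := by
    have h1' : S.src a.1 = S.rng b.1 := congrArg Subtype.val h1
    have h2' : S.src b.1 = S.rng c.1 := congrArg Subtype.val h2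
    have hab := S.rmul_val K a b h1'
    have hbc := S.rmul_val K b c h2'
    apply Subtype.ext
    calc (S.rmul K (S.rmul K a b) c).1
        = S.mul (S.rmul K a b).1 c.1 :=
          S.rmul_val K _ _ (by rw [hab, S.src_mul _ _ h1']; exact h2')
      _ = S.mul (S.mul a.1 b.1) c.1 := by rw [hab]
      _ = S.mul a.1 (S.mul b.1 c.1) := S.mul_assoc _ _ _ h1' h2'
      _ = S.mul a.1 (S.rmul K b c).1 := by rw [hbc]
      _ = (S.rmul K a (S.rmul K b c)).1 :=
          (S.rmul_val K _ _ (by rw [hbc, S.rng_mul _ _ h2']; exact h1')).symm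
  src_mul a b h := by
    have h' : S.src a.1 = S.rng b.1 := congrArg Subtype.val h
    apply Subtype.ext
    show S.src (S.rmul K a b).1 = S.src b.1
    rw [S.rmul_val K a b h', S.src_mul _ _ h']
  rng_mul a b h := by
    have h' : S.src a.1 = S.rng b.1 := congrArg Subtype.val h
    apply Subtype.ext
    show S.rng (S.rmul K a b).1 = S.rng a.1
    rw [S.rmul_val K a b h', S.rng_mul _ _ h']
  mul_src a := by
    apply Subtype.ext
    rw [S.rmul_val K a _ (by rw [rsrc_val, S.rng_src]), rsrc_val]
    exact S.mul_src a.1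
  rng_mul_self a := by
    apply Subtype.ext
    rw [S.rmul_val K _ a (by rw [rrng_val, S.src_rng]), rrng_val]
    exact S.rng_mul_self a.1
  src_inv a := Subtype.ext (S.src_inv a.1)
  rng_inv a := Subtype.ext (S.rng_inv a.1)
  mul_inv a := by
    apply Subtype.ext
    rw [S.rmul_val K a _ (by rw [rinv_val, S.rng_inv]), rinv_val]
    exact S.mul_inv a.1
  inv_mul a := by
    apply Subtype.ext
    rw [S.rmul_val K _ a (by rw [rinv_val, S.src_inv]), rinv_val]
    exact S.inv_mul a.1

variable {S K}

/-- The data of a groupoid equivalence between `G` and `H`: a space `Z` carrying commuting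
free and proper continuous actions of `G` (on the left) and `H` (on the right), whose anchor
maps `ρ : Z → G⁰` and `σ : Z → H⁰` induce homeomorphisms `Z/H ≅ G⁰` and `G\Z ≅ H⁰`.
The latter conditions are encoded by requiring that the fibres of `ρ` are exactly the
`H`-orbits, that `ρ` is surjective onto `G⁰`, and that `ρ` is a topological quotient map onto
`G⁰` (and symmetrically for `σ`): this says precisely that the induced map `Z/H → G⁰` is a
homeomorphism. -/
structure GroupoidEquivalenceData [TopologicalSpace G] [TopologicalSpace H]
    (S : GroupoidStruct G) (T : GroupoidStruct H) (Z : Type w) [TopologicalSpace Z] where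
  ρ : Z → G
  σ : Z → H
  ρ_unit : ∀ z, ρ z ∈ S.units
  σ_unit : ∀ z, σ z ∈ T.units
  continuous_ρ : Continuous ρ
  continuous_σ : Continuous σ
  actL : G → Z → Z
  actR : Z → H → Z
  ρ_actL : ∀ g z, S.src g = ρ z → ρ (actL g z) = S.rng g
  σ_actL : ∀ g z, S.src g = ρ z → σ (actL g z) = σ z
  actL_unit : ∀ z, actL (ρ z) z = z
  actL_mul : ∀ g g' z, S.src g = S.rng g' → S.src g' = ρ z →
    actL (S.mul g g') z = actL g (actL g' z)
  σ_actR : ∀ z h, σ z = T.rng h → σ (actR z h) = T.src h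
  ρ_actR : ∀ z h, σ z = T.rng h → ρ (actR z h) = ρ z
  actR_unit : ∀ z, actR z (σ z) = z
  actR_mul : ∀ z h h', σ z = T.rng h → T.src h = T.rng h' →
    actR (actR z h) h' = actR z (T.mul h h')
  act_comm : ∀ g z h, S.src g = ρ z → σ z = T.rng h →
    actL g (actR z h) = actR (actL g z) h
  continuousOn_actL :
    ContinuousOn (fun p : G × Z => actL p.1 p.2) {p : G × Z | S.src p.1 = ρ p.2}
  continuousOn_actR :
    ContinuousOn (fun p : Z × H => actR p.1 p.2) {p : Z × H | σ p.1 = T.rng p.2}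
  free_actL : ∀ g z, S.src g = ρ z → actL g z = z → g = ρ z
  free_actR : ∀ z h, σ z = T.rng h → actR z h = z → h = σ z
  proper_actL : IsProperMap (fun p : {q : G × Z // S.src q.1 = ρ q.2} =>
    ((actL p.1.1 p.1.2, p.1.2) : Z × Z))
  proper_actR : IsProperMap (fun p : {q : Z × H // σ q.1 = T.rng q.2} =>
    ((actR p.1.1 p.1.2, p.1.1) : Z × Z))
  ρ_fiber_orbit : ∀ z z', ρ z = ρ z' ↔ ∃ h, σ z = T.rng h ∧ z' = actR z h
  σ_fiber_orbit : ∀ z z', σ z = σ z' ↔ ∃ g, S.src g = ρ z ∧ z' = actL g z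
  ρ_surj : Set.range ρ = S.units
  σ_surj : Set.range σ = T.units
  quotient_ρ : Topology.IsQuotientMap (fun z => (⟨ρ z, ρ_unit z⟩ : S.units))
  quotient_σ : Topology.IsQuotientMap (fun z => (⟨σ z, σ_unit z⟩ : T.units))

/-- `G` and `H` are groupoid equivalent if there exists a `G`–`H` equivalence. -/
def GroupoidEquivalent [TopologicalSpace G] [TopologicalSpace H]
    (S : GroupoidStruct G) (T : GroupoidStruct H) : Prop :=
  ∃ (Z : Type (max u v)) (_ : TopologicalSpace Z), Nonempty (GroupoidEquivalenceData S T Z)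

/-- Kakutani equivalence of ample groupoids: there are full clopen subsets `X ⊆ G⁰`, `Y ⊆ H⁰`
with `G|_X ≅ H|_Y`. -/
def KakutaniEquivalent [TopologicalSpace G] [TopologicalSpace H]
    (S : GroupoidStruct G) (T : GroupoidStruct H) : Prop :=
  ∃ (X : Set G) (Y : Set H), S.IsUnitClopen X ∧ S.IsFull X ∧ T.IsUnitClopen Y ∧ T.IsFull Y ∧
    Nonempty (GroupoidIso (S.restrict X) (T.restrict Y))

end GroupoidStruct

namespace GroupoidStruct

variable {G : Type u} (S : GroupoidStruct G) {a b : G}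

theorem inv_eq_of_mul (h1 : S.src a = S.rng b) (h2 : S.mul a b = S.rng a) : S.inv a = b := by
  have e1 : S.mul (S.inv a) (S.rng a) = S.inv a := by
    have := S.mul_src (S.inv a); rwa [S.src_inv] at this
  calc S.inv a = S.mul (S.inv a) (S.rng a) := e1.symm
    _ = S.mul (S.inv a) (S.mul a b) := by rw [h2]
    _ = S.mul (S.mul (S.inv a) a) b := (S.mul_assoc _ _ _ (S.src_inv a) h1).symm
    _ = S.mul (S.rng b) b := by rw [S.inv_mul, h1]
    _ = b := S.rng_mul_self b

theorem inv_inv (a : G) : S.inv (S.inv a) = a := by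
  apply S.inv_eq_of_mul
  · rw [S.src_inv]
  · rw [S.inv_mul, S.rng_inv]

theorem mul_mul_inv_cancel (h : S.src a = S.rng b) : S.mul (S.mul a b) (S.inv b) = a := by
  rw [S.mul_assoc _ _ _ h (by rw [S.rng_inv]), S.mul_inv, ← h, S.mul_src]

theorem inv_mul_cancel_left (h : S.src a = S.rng b) : S.mul (S.inv a) (S.mul a b) = b := by
  rw [← S.mul_assoc _ _ _ (by rw [S.src_inv]) h, S.inv_mul, h, S.rng_mul_self]

theorem mul_inv_cancel_left (h : S.rng a = S.rng b) : S.mul a (S.mul (S.inv a) b) = b := by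
  rw [← S.mul_assoc _ _ _ (by rw [S.rng_inv]) (by rw [S.src_inv, h]), S.mul_inv, h,
    S.rng_mul_self]

theorem mul_inv_mul_cancel (h : S.src a = S.src b) : S.mul (S.mul a (S.inv b)) b = a := by
  rw [S.mul_assoc _ _ _ (by rw [S.rng_inv, h]) (S.src_inv b), S.inv_mul, ← h, S.mul_src]

theorem inv_mul_rev (h : S.src a = S.rng b) : S.inv (S.mul a b) = S.mul (S.inv b) (S.inv a) := by
  have hcab : S.src (S.inv b) = S.rng (S.inv a) := by rw [S.src_inv, S.rng_inv, h]
  apply S.inv_eq_of_mul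
  · rw [S.src_mul _ _ h, S.rng_mul _ _ hcab, S.rng_inv]
  · have h1 : S.src b = S.rng (S.mul (S.inv b) (S.inv a)) := by rw [S.rng_mul _ _ hcab, S.rng_inv]
    rw [S.mul_assoc _ _ _ h h1]
    rw [← S.mul_assoc _ _ _ (by rw [S.rng_inv]) hcab, S.mul_inv, ← h]
    have h2 : S.mul (S.src a) (S.inv a) = S.inv a := by
      have := S.rng_mul_self (S.inv a); rwa [S.rng_inv] at this
    rw [h2, S.mul_inv, S.rng_mul _ _ h]

@[simp] theorem rngMap_val (g : G) : (S.rngMap g).1 = S.rng g := rfl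
@[simp] theorem srcMap_val (g : G) : (S.srcMap g).1 = S.src g := rfl

theorem rngMap_src (g : G) : S.rngMap (S.src g) = S.srcMap g := Subtype.ext (S.rng_src g)
theorem srcMap_src (g : G) : S.srcMap (S.src g) = S.srcMap g := Subtype.ext (S.src_src g)
theorem srcMap_rng (g : G) : S.srcMap (S.rng g) = S.rngMap g := Subtype.ext (S.src_rng g)
theorem rngMap_rng (g : G) : S.rngMap (S.rng g) = S.rngMap g := Subtype.ext (S.rng_rng g)
theorem rngMap_inv (g : G) : S.rngMap (S.inv g) = S.srcMap g := Subtype.ext (S.rng_inv g)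
theorem srcMap_inv (g : G) : S.srcMap (S.inv g) = S.rngMap g := Subtype.ext (S.src_inv g)
theorem srcMap_unit (x : S.units) : S.srcMap x.1 = x := Subtype.ext x.2.1
theorem rngMap_unit (x : S.units) : S.rngMap x.1 = x := Subtype.ext x.2.2

section Topology

variable [TopologicalSpace G]
variable {S}

theorem IsAmple.continuous_rngMap {S : GroupoidStruct G} (hS : S.IsAmple) :
    Continuous S.rngMap :=
  hS.isLocalHomeomorph_rngMap.continuous

theorem IsAmple.continuous_srcMap {S : GroupoidStruct G} (hS : S.IsAmple) :
    Continuous S.srcMap :=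
  hS.isLocalHomeomorph_srcMap.continuous

/-- A "transport bundle": a clopen piece `V` of the unit space together with a continuous
choice of arrows `c x` from a point of `K` to `x`, such that the sources form a bisection. -/
structure TransB (S : GroupoidStruct G) (K : Set G) where
  V : Set S.units
  c : S.units → G
  ψ : S.units → S.units
  clopenV : IsClopen V
  contc : ContinuousOn c V
  rng_c : ∀ x ∈ V, S.rng (c x) = x.1
  src_c : ∀ x ∈ V, S.src (c x) ∈ K
  contψ : ContinuousOn ψ ((fun x => S.srcMap (c x)) '' V)
  ψ_c : ∀ x ∈ V, ψ (S.srcMap (c x)) = x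
  clopen_img : ∀ A ⊆ V, IsClopen A → IsClopen ((fun x => S.srcMap (c x)) '' A)

variable {K : Set G}

/-- The identity transport bundle on `K`. -/
def TransB.idK (hK : S.IsUnitClopen K) : TransB S K where
  V := {x : S.units | x.1 ∈ K}
  c := fun x => x.1
  ψ := id
  clopenV := hK.2
  contc := continuous_subtype_val.continuousOn
  rng_c := fun x _ => x.2.2
  src_c := fun x hx => by rw [x.2.1]; exact hx
  contψ := continuous_id.continuousOn
  ψ_c := fun x _ => by rw [S.srcMap_unit x]; rfl
  clopen_img := by
    intro A _ hA
    have : (fun x : S.units => S.srcMap ((fun y : S.units => y.1) x)) '' A = A := by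
      rw [show (fun x : S.units => S.srcMap ((fun y : S.units => y.1) x)) = id from
        funext fun x => S.srcMap_unit x]
      exact Set.image_id A
    rwa [this]

theorem exists_transB (hS : S.IsAmple) (hK : S.IsUnitClopen K) {g : G} (hgK : S.src g ∈ K) :
    ∃ tb : TransB S K, S.rngMap g ∈ tb.V := by
  haveI := hS.t2_units
  obtain ⟨e, hge, hee⟩ := hS.isLocalHomeomorph_rngMap g
  obtain ⟨f, hgf, hff⟩ := hS.isLocalHomeomorph_srcMap g
  obtain ⟨Bas, hBas1, hBas2⟩ := hS.compact_open_basis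
  have hopen : IsOpen (e.source ∩ f.source ∩ S.srcMap ⁻¹' {x : S.units | x.1 ∈ K}) :=
    (e.open_source.inter f.open_source).inter (hK.2.2.preimage hS.continuous_srcMap)
  have hgmem : g ∈ e.source ∩ f.source ∩ S.srcMap ⁻¹' {x : S.units | x.1 ∈ K} :=
    ⟨⟨hge, hgf⟩, hgK⟩
  obtain ⟨B, hBmem, hgB, hBsub⟩ := hBas2.exists_subset_of_mem_open hgmem hopen
  obtain ⟨hBcomp, hBopen⟩ := hBas1 B hBmem
  have hBe : B ⊆ e.source := fun x hx => (hBsub hx).1.1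
  have hBf : B ⊆ f.source := fun x hx => (hBsub hx).1.2
  have hBK : ∀ y ∈ B, S.src y ∈ K := fun y hy => (hBsub hy).2
  have hVcomp : IsCompact (⇑e '' B) := hBcomp.image_of_continuousOn (e.continuousOn.mono hBe)
  have hVt : ⇑e '' B ⊆ e.target := by
    rintro x ⟨y, hy, rfl⟩; exact e.map_source (hBe hy)
  have hcinv : ∀ x ∈ ⇑e '' B, ⇑e.symm x ∈ B ∧ ⇑e (⇑e.symm x) = x := by
    rintro x ⟨y, hy, rfl⟩
    rw [e.left_inv (hBe hy)]
    exact ⟨hy, rfl⟩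
  have hrmap : ∀ y : G, S.rngMap y = e y := fun y => congrFun hee y
  have hsmap : ∀ y : G, S.srcMap y = f y := fun y => congrFun hff y
  refine ⟨⟨⇑e '' B, ⇑e.symm, fun k => S.rngMap (f.symm k), ?_, ?_, ?_, ?_, ?_, ?_, ?_⟩,
    ⟨g, hgB, (hrmap g).symm⟩⟩
  · exact ⟨hVcomp.isClosed, e.isOpen_image_of_subset_source hBopen hBe⟩
  · exact e.symm.continuousOn.mono hVt
  · rintro x ⟨y, hy, rfl⟩
    rw [e.left_inv (hBe hy)]
    exact congrArg Subtype.val (hrmap y)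
  · rintro x ⟨y, hy, rfl⟩
    rw [e.left_inv (hBe hy)]
    exact hBK y hy
  · have hsub : (fun x => S.srcMap (⇑e.symm x)) '' (⇑e '' B) ⊆ f.target := by
      rintro k ⟨x, hx, rfl⟩
      show S.srcMap (⇑e.symm x) ∈ f.target
      rw [hsmap]
      exact f.map_source (hBf (hcinv x hx).1)
    exact (hS.continuous_rngMap.comp_continuousOn f.symm.continuousOn).mono hsub
  · rintro x ⟨y, hy, rfl⟩
    show S.rngMap (⇑f.symm (S.srcMap (⇑e.symm (⇑e y)))) = ⇑e y
    rw [e.left_inv (hBe hy), hsmap, f.left_inv (hBf hy), hrmap]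
  · intro A hAV hA
    have himg : (fun x => S.srcMap (⇑e.symm x)) '' A = ⇑f '' (⇑e.symm '' A) := by
      rw [Set.image_image]
      exact Set.image_congr fun x _ => hsmap _
    have hAB : ⇑e.symm '' A ⊆ B := by
      rintro y ⟨x, hx, rfl⟩; exact (hcinv x (hAV hx)).1
    constructor
    · rw [himg]
      have hAcomp : IsCompact A := hVcomp.of_isClosed_subset hA.isClosed hAV
      have : IsCompact (⇑f '' (⇑e.symm '' A)) :=
        ((hAcomp.image_of_continuousOn (e.symm.continuousOn.mono (hAV.trans hVt)))).image_of_continuousOn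
          (f.continuousOn.mono (hAB.trans hBf))
      exact this.isClosed
    · rw [himg]
      have hopenA : IsOpen (⇑e.symm '' A) := by
        apply e.symm.isOpen_image_of_subset_source hA.isOpen
        rw [e.symm_source]
        exact hAV.trans hVt
      exact f.isOpen_image_of_subset_source hopenA (hAB.trans hBf)

end Topology
end GroupoidStruct

namespace GroupoidStruct

open Classical in
theorem count_congr_of_agree {p q : ℕ → Prop} {n : ℕ} (h : ∀ m < n, (p m ↔ q m)) :
    Nat.count p n = Nat.count q n := by
  induction n with
  | zero => simp
  | succ n ih =>
    rw [Nat.count_succ, Nat.count_succ, ih fun m hm => h m (by omega)]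
    by_cases hp : p n
    · rw [if_pos hp, if_pos ((h n (by omega)).mp hp)]
    · rw [if_neg hp, if_neg (fun hq => hp ((h n (by omega)).mpr hq))]

open Classical in
theorem nth_congr_of_agree {p q : ℕ → Prop} (hp : (setOf p).Infinite) {N i : ℕ}
    (h : ∀ n ≤ N, (p n ↔ q n)) (hN : Nat.nth p i ≤ N) :
    Nat.nth p i = Nat.nth q i := by
  have h1 : q (Nat.nth p i) := (h _ hN).mp (Nat.nth_mem_of_infinite hp i)
  have h2 : Nat.count q (Nat.nth p i) = i := by
    rw [← count_congr_of_agree (p := p) (q := q) fun m hm => h m (by omega)]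
    exact Nat.count_nth_of_infinite hp i
  conv_rhs => rw [← h2]
  rw [Nat.nth_count h1]

theorem pair_zero_strictMono : StrictMono (fun j => Nat.pair 0 j) :=
  fun _ _ h => Nat.pair_lt_pair_right 0 h

open Classical in
theorem nth_le_pair {p : ℕ → Prop} (hP : ∀ j, p (Nat.pair 0 j)) (i : ℕ) :
    Nat.nth p i ≤ Nat.pair 0 i := by
  have hcount : i < Nat.count p (Nat.pair 0 i + 1) := by
    have hsub : (Finset.range (i+1)).image (fun j => Nat.pair 0 j) ⊆
        (Finset.range (Nat.pair 0 i + 1)).filter p := by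
      intro x hx
      obtain ⟨j, hj, rfl⟩ := Finset.mem_image.mp hx
      refine Finset.mem_filter.mpr ⟨Finset.mem_range.mpr ?_, hP j⟩
      have := pair_zero_strictMono.monotone (Nat.lt_succ_iff.mp (Finset.mem_range.mp hj))
      omega
    rw [Nat.count_eq_card_filter_range]
    calc i < i + 1 := by omega
      _ = ((Finset.range (i+1)).image (fun j => Nat.pair 0 j)).card := by
          rw [Finset.card_image_of_injective _ pair_zero_strictMono.injective, Finset.card_range]
      _ ≤ _ := Finset.card_le_card hsub
  have := Nat.nth_lt_of_lt_count hcount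
  omega

theorem infinite_of_pair_zero {Q : ℕ → Prop} (hQ : ∀ j, Q (Nat.pair 0 j)) :
    (setOf Q).Infinite :=
  Set.infinite_of_injective_forall_mem (f := fun j => Nat.pair 0 j)
    pair_zero_strictMono.injective hQ

variable {G : Type u} [TopologicalSpace G] {S : GroupoidStruct G} {K : Set G}

/-- A countable system of transport bundles covering the unit space, whose zeroth bundle is
the identity bundle on `K`. -/
structure TransSystem (S : GroupoidStruct G) (K : Set G) where
  t : ℕ → TransB S K
  cover : ∀ x : S.units, ∃ m, x ∈ (t m).V
  V0 : (t 0).V = {x : S.units | x.1 ∈ K}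
  c0 : ∀ x, (t 0).c x = x.1

theorem exists_transSystem (hS : S.IsAmple) (hc : IsSigmaCompact S.units)
    (hK : S.IsUnitClopen K) (hKf : S.IsFull K) : Nonempty (TransSystem S K) := by
  haveI := hS.t2_units
  have hpoint : ∀ x : S.units, ∃ tb : TransB S K, x ∈ tb.V := by
    intro x
    have hx : x.1 ∈ S.rng '' (S.src ⁻¹' K) := by rw [hKf]; exact x.2
    obtain ⟨g, hgK, hgx⟩ := hx
    obtain ⟨tb, htb⟩ := exists_transB hS hK hgK
    have he : S.rngMap g = x := Subtype.ext hgx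
    exact ⟨tb, he ▸ htb⟩
  choose tb htb using hpoint
  obtain ⟨C, hCcomp, hCun⟩ := hc
  have hCsub : ∀ n, C n ⊆ S.units := fun n => hCun ▸ Set.subset_iUnion C n
  have hcomp' : ∀ n, IsCompact (Subtype.val ⁻¹' (C n) : Set S.units) := by
    intro n
    rw [Subtype.isCompact_iff, Subtype.image_preimage_coe]
    rw [Set.inter_eq_self_of_subset_right (hCsub n)]
    exact hCcomp n
  have hfin : ∀ n, ∃ s : Finset S.units,
      (Subtype.val ⁻¹' (C n) : Set S.units) ⊆ ⋃ x ∈ s, (tb x).V := by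
    intro n
    exact (hcomp' n).elim_finite_subcover (fun x : S.units => (tb x).V)
      (fun x => (tb x).clopenV.isOpen) (fun y _ => Set.mem_iUnion.mpr ⟨y, htb y⟩)
  choose s hs using hfin
  set 𝒯 : Set (TransB S K) := ⋃ n, (fun x => tb x) '' ↑(s n) with h𝒯
  have hc𝒯 : Set.Countable 𝒯 :=
    Set.countable_iUnion fun n => ((s n).finite_toSet.image _).countable
  obtain ⟨F, hF⟩ := (hc𝒯.insert (TransB.idK hK)).exists_eq_range
    ⟨_, Set.mem_insert _ _⟩
  refine ⟨⟨fun m => Nat.casesOn m (TransB.idK hK) F, ?_, rfl, fun x => rfl⟩⟩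
  intro x
  have hx : x.1 ∈ ⋃ n, C n := by rw [hCun]; exact x.2
  obtain ⟨n, hn⟩ := Set.mem_iUnion.mp hx
  obtain ⟨y, hy⟩ := Set.mem_iUnion.mp (hs n hn)
  obtain ⟨hys, hyV⟩ := Set.mem_iUnion.mp hy
  have : tb y ∈ insert (TransB.idK hK) 𝒯 :=
    Set.mem_insert_iff.mpr (Or.inr (Set.mem_iUnion.mpr ⟨n, Set.mem_image_of_mem _ hys⟩))
  rw [hF] at this
  obtain ⟨m, hm⟩ := this
  exact ⟨m + 1, by simpa [hm] using hyV⟩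

namespace TransSystem

variable (T : TransSystem S K)

def A (m : ℕ) : Set S.units := (T.t m).V \ ⋃ j ∈ Finset.range m, (T.t j).V

theorem mem_V_idx (x : S.units) : x ∈ (T.t (sInf {m | x ∈ (T.t m).V})).V :=
  Nat.sInf_mem (T.cover x)

noncomputable def idx (x : S.units) : ℕ := sInf {m | x ∈ (T.t m).V}

theorem mem_V_idx' (x : S.units) : x ∈ (T.t (T.idx x)).V := T.mem_V_idx x

theorem idx_le {m : ℕ} {x : S.units} (h : x ∈ (T.t m).V) : T.idx x ≤ m := Nat.sInf_le h

theorem not_mem_of_lt_idx {m : ℕ} {x : S.units} (h : m < T.idx x) : x ∉ (T.t m).V :=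
  Nat.notMem_of_lt_sInf h

theorem mem_A_idx (x : S.units) : x ∈ T.A (T.idx x) := by
  refine ⟨T.mem_V_idx' x, ?_⟩
  intro hx
  obtain ⟨j, hj⟩ := Set.mem_iUnion.mp hx
  obtain ⟨hjr, hjV⟩ := Set.mem_iUnion.mp hj
  exact T.not_mem_of_lt_idx (Finset.mem_range.mp hjr) hjV

theorem mem_A_iff {m : ℕ} {x : S.units} : x ∈ T.A m ↔ T.idx x = m := by
  constructor
  · rintro ⟨hV, hnot⟩
    by_contra hne
    have hlt : T.idx x < m := lt_of_le_of_ne (T.idx_le hV) hne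
    exact hnot (Set.mem_iUnion.mpr ⟨T.idx x,
      Set.mem_iUnion.mpr ⟨Finset.mem_range.mpr hlt, T.mem_V_idx' x⟩⟩)
  · rintro rfl
    exact T.mem_A_idx x

theorem clopen_A (m : ℕ) : IsClopen (T.A m) :=
  (T.t m).clopenV.diff (isClopen_biUnion_finset fun j _ => (T.t j).clopenV)

theorem A_subset_V (m : ℕ) : T.A m ⊆ (T.t m).V := Set.diff_subset

noncomputable def C (x : S.units) : G := (T.t (T.idx x)).c x

noncomputable def kap (x : S.units) : S.units := S.srcMap (T.C x)

def Sset (m : ℕ) : Set S.units := (fun x => S.srcMap ((T.t m).c x)) '' (T.A m)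

def Epred (k : S.units) : ℕ → Prop := fun n => n.unpair.1 = 0 ∨ k ∉ T.Sset n.unpair.1

open Classical in
noncomputable def lvl (x : S.units) (i : ℕ) : ℕ :=
  if T.idx x = 0 then Nat.nth (T.Epred x) i else Nat.pair (T.idx x) i

open Classical in
noncomputable def ptv (k : S.units) (n : ℕ) : S.units :=
  if n.unpair.1 ≠ 0 ∧ k ∈ T.Sset n.unpair.1 then (T.t n.unpair.1).ψ k else k

open Classical in
noncomputable def lvl2 (k : S.units) (n : ℕ) : ℕ :=
  if n.unpair.1 ≠ 0 ∧ k ∈ T.Sset n.unpair.1 then n.unpair.2 else Nat.count (T.Epred k) n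

theorem Epred_pair_zero (k : S.units) (j : ℕ) : T.Epred k (Nat.pair 0 j) :=
  Or.inl (by rw [Nat.unpair_pair])

theorem Epred_infinite (k : S.units) : (setOf (T.Epred k)).Infinite :=
  infinite_of_pair_zero (T.Epred_pair_zero k)

theorem rng_C (x : S.units) : S.rng (T.C x) = x.1 := (T.t _).rng_c x (T.mem_V_idx' x)

theorem src_C_mem (x : S.units) : S.src (T.C x) ∈ K := (T.t _).src_c x (T.mem_V_idx' x)

theorem kap_val (x : S.units) : (T.kap x).1 = S.src (T.C x) := rfl

theorem kap_mem (x : S.units) : (T.kap x).1 ∈ K := T.src_C_mem x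

theorem idx_eq_zero_iff {x : S.units} : T.idx x = 0 ↔ x.1 ∈ K := by
  constructor
  · intro h
    have := T.mem_V_idx' x
    rw [h, T.V0] at this
    exact this
  · intro h
    have : x ∈ (T.t 0).V := by rw [T.V0]; exact h
    exact Nat.le_zero.mp (T.idx_le this)

theorem C_of_unitK {x : S.units} (h : x.1 ∈ K) : T.C x = x.1 := by
  rw [C, T.idx_eq_zero_iff.mpr h, T.c0]

theorem kap_of_unitK {x : S.units} (h : x.1 ∈ K) : T.kap x = x := by
  rw [kap, T.C_of_unitK h, S.srcMap_unit]

theorem kap_mem_Sset {x : S.units} (h : T.idx x ≠ 0) : T.kap x ∈ T.Sset (T.idx x) :=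
  ⟨x, T.mem_A_idx x, rfl⟩

theorem Sset_spec {k : S.units} {m : ℕ} (h : k ∈ T.Sset m) :
    (T.t m).ψ k ∈ T.A m ∧ S.srcMap ((T.t m).c ((T.t m).ψ k)) = k ∧ T.idx ((T.t m).ψ k) = m := by
  obtain ⟨x, hxA, rfl⟩ := h
  have hψ : (T.t m).ψ (S.srcMap ((T.t m).c x)) = x := (T.t m).ψ_c x (T.A_subset_V m hxA)
  rw [hψ]
  exact ⟨hxA, rfl, T.mem_A_iff.mp hxA⟩

theorem clopen_Sset (m : ℕ) : IsClopen (T.Sset m) :=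
  (T.t m).clopen_img _ (T.A_subset_V m) (T.clopen_A m)

theorem ψ_kap {x : S.units} :
    (T.t (T.idx x)).ψ (T.kap x) = x := (T.t _).ψ_c x (T.mem_V_idx' x)

open Classical in
theorem ptv_lvl (x : S.units) (i : ℕ) :
    T.ptv (T.kap x) (T.lvl x i) = x ∧ T.lvl2 (T.kap x) (T.lvl x i) = i := by
  classical
  by_cases h0 : T.idx x = 0
  · have hxK : x.1 ∈ K := T.idx_eq_zero_iff.mp h0
    have hkap : T.kap x = x := T.kap_of_unitK hxK
    have hlvl : T.lvl x i = Nat.nth (T.Epred x) i := if_pos h0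
    have hEn : T.Epred x (Nat.nth (T.Epred x) i) :=
      Nat.nth_mem_of_infinite (T.Epred_infinite x) i
    have hcond : ¬((Nat.nth (T.Epred x) i).unpair.1 ≠ 0 ∧
        x ∈ T.Sset (Nat.nth (T.Epred x) i).unpair.1) := by
      rcases hEn with h | h
      · exact fun hc => hc.1 h
      · exact fun hc => h hc.2
    constructor
    · rw [hkap, hlvl, ptv, if_neg hcond]
    · rw [hkap, hlvl, lvl2, if_neg hcond]
      exact Nat.count_nth_of_infinite (T.Epred_infinite x) i
  · have hmem : T.kap x ∈ T.Sset (T.idx x) := T.kap_mem_Sset h0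
    have hlvl : T.lvl x i = Nat.pair (T.idx x) i := if_neg h0
    have hup : (Nat.pair (T.idx x) i).unpair = (T.idx x, i) := Nat.unpair_pair _ _
    have hcond : (Nat.pair (T.idx x) i).unpair.1 ≠ 0 ∧
        T.kap x ∈ T.Sset (Nat.pair (T.idx x) i).unpair.1 := by
      rw [hup]
      exact ⟨h0, hmem⟩
    constructor
    · rw [hlvl, ptv, if_pos hcond, hup]
      exact T.ψ_kap
    · rw [hlvl, lvl2, if_pos hcond, hup]

open Classical in
theorem kap_ptv {k : S.units} (hk : k.1 ∈ K) (n : ℕ) :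
    T.kap (T.ptv k n) = k ∧ T.lvl (T.ptv k n) (T.lvl2 k n) = n := by
  classical
  by_cases hcond : n.unpair.1 ≠ 0 ∧ k ∈ T.Sset n.unpair.1
  · obtain ⟨hA, hsrc, hidx⟩ := T.Sset_spec hcond.2
    have hptv : T.ptv k n = (T.t n.unpair.1).ψ k := if_pos hcond
    have hlvl2 : T.lvl2 k n = n.unpair.2 := if_pos hcond
    constructor
    · rw [hptv, kap, C, hidx, hsrc]
    · rw [hptv, hlvl2, lvl, hidx, if_neg hcond.1, Nat.pair_unpair]
  · have hptv : T.ptv k n = k := if_neg hcond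
    have hlvl2 : T.lvl2 k n = Nat.count (T.Epred k) n := if_neg hcond
    have hEn : T.Epred k n := by
      rw [Epred]
      push_neg at hcond
      by_cases h1 : n.unpair.1 = 0
      · exact Or.inl h1
      · exact Or.inr (hcond h1)
    constructor
    · rw [hptv]
      exact T.kap_of_unitK hk
    · rw [hptv, hlvl2, lvl, if_pos (T.idx_eq_zero_iff.mpr hk)]
      exact Nat.nth_count hEn

end TransSystem
end GroupoidStruct

namespace GroupoidStruct

theorem continuousAt_of_eqOn {X : Type*} {Y : Type*} [TopologicalSpace X] [TopologicalSpace Y]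
    {f g : X → Y} {z₀ : X} {U : Set X} (hU : U ∈ nhds z₀) (hg : ContinuousOn g U)
    (heq : ∀ z ∈ U, f z = g z) : ContinuousAt f z₀ :=
  (hg.continuousAt hU).congr (by filter_upwards [hU] with z hz; exact (heq z hz).symm)

variable {G : Type u} [TopologicalSpace G] {S : GroupoidStruct G} {K : Set G}

namespace TransSystem

variable (T : TransSystem S K)

theorem agree_W (x₀ : S.units) (N : ℕ) : ∃ W : Set S.units, IsClopen W ∧ x₀ ∈ W ∧
    ∀ k ∈ W, ∀ n ≤ N, (T.Epred k n ↔ T.Epred x₀ n) := by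
  refine ⟨⋂ m' ∈ Finset.range (N+1), {k | k ∈ T.Sset m' ↔ x₀ ∈ T.Sset m'}, ?_, ?_, ?_⟩
  · apply isClopen_biInter_finset
    intro m' _
    by_cases h : x₀ ∈ T.Sset m'
    · have he : {k : S.units | k ∈ T.Sset m' ↔ x₀ ∈ T.Sset m'} = T.Sset m' := by
        ext k; simp [h]
      rw [he]; exact T.clopen_Sset m'
    · have he : {k : S.units | k ∈ T.Sset m' ↔ x₀ ∈ T.Sset m'} = (T.Sset m')ᶜ := by
        ext k; simp [h]
      rw [he]; exact (T.clopen_Sset m').compl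
  · exact Set.mem_iInter₂.mpr fun m' _ => Iff.rfl
  · intro k hk n hn
    have hm' := Set.mem_iInter₂.mp hk n.unpair.1
      (Finset.mem_range.mpr (by have := Nat.unpair_left_le n; omega))
    exact or_congr Iff.rfl (not_congr hm')

variable {X : Type v} [TopologicalSpace X]

theorem continuous_C_comp (u : X → S.units) (hu : Continuous u) :
    Continuous fun z => T.C (u z) := by
  rw [continuous_iff_continuousAt]
  intro z₀
  set m := T.idx (u z₀) with hm
  have hU : u ⁻¹' (T.A m) ∈ nhds z₀ :=
    ((T.clopen_A m).preimage hu).isOpen.mem_nhds (T.mem_A_idx (u z₀))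
  apply continuousAt_of_eqOn hU
    ((T.t m).contc.comp hu.continuousOn fun z hz => T.A_subset_V m hz)
  intro z hz
  show T.C (u z) = (T.t m).c (u z)
  rw [C, T.mem_A_iff.mp hz]

theorem continuous_lvl_comp (u : X → S.units) (hu : Continuous u) :
    Continuous fun q : X × ℕ => T.lvl (u q.1) q.2 := by
  rw [continuous_iff_continuousAt]
  rintro ⟨z₀, i₀⟩
  by_cases h0 : T.idx (u z₀) = 0
  · -- locally nth (Epred x) i₀, locally constant
    obtain ⟨W, hWclopen, hWmem, hW⟩ := T.agree_W (u z₀) (Nat.pair 0 i₀)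
    have hU : ((fun q : X × ℕ => u q.1) ⁻¹' (T.A 0 ∩ W)) ∩ Prod.snd ⁻¹' {i₀}
        ∈ nhds (z₀, i₀) := by
      apply Filter.inter_mem
      · exact (((T.clopen_A 0).inter hWclopen).preimage
          (hu.comp continuous_fst)).isOpen.mem_nhds ⟨h0 ▸ T.mem_A_idx (u z₀), hWmem⟩
      · exact continuous_snd.continuousAt.preimage_mem_nhds
          ((isOpen_discrete _).mem_nhds rfl)
    apply continuousAt_of_eqOn hU continuousOn_const
    rintro ⟨z, i⟩ ⟨hz, hi⟩
    have hi' : i = i₀ := hi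
    have hidx : T.idx (u z) = 0 := T.mem_A_iff.mp hz.1
    show T.lvl (u z) i = T.lvl (u z₀) i₀
    rw [hi', lvl, lvl, if_pos hidx, if_pos h0]
    exact nth_congr_of_agree (T.Epred_infinite (u z)) (hW _ hz.2)
      (nth_le_pair (T.Epred_pair_zero (u z)) i₀)
  · have hU : ((fun q : X × ℕ => u q.1) ⁻¹' (T.A (T.idx (u z₀)))) ∩ Prod.snd ⁻¹' {i₀}
        ∈ nhds (z₀, i₀) := by
      apply Filter.inter_mem
      · exact ((T.clopen_A _).preimage (hu.comp continuous_fst)).isOpen.mem_nhds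
          (T.mem_A_idx (u z₀))
      · exact continuous_snd.continuousAt.preimage_mem_nhds
          ((isOpen_discrete _).mem_nhds rfl)
    apply continuousAt_of_eqOn hU continuousOn_const
    rintro ⟨z, i⟩ ⟨hz, hi⟩
    have hi' : i = i₀ := hi
    have hidx : T.idx (u z) = T.idx (u z₀) := T.mem_A_iff.mp hz
    show T.lvl (u z) i = T.lvl (u z₀) i₀
    rw [hi', lvl, lvl, if_neg (hidx ▸ h0), if_neg h0, hidx]

theorem continuous_C2_comp (u : X → S.units) (hu : Continuous u)
    (hmem : ∀ z, (u z).1 ∈ K) :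
    Continuous fun q : X × ℕ => T.C (T.ptv (u q.1) q.2) := by
  rw [continuous_iff_continuousAt]
  rintro ⟨z₀, n₀⟩
  have hsnd : (Prod.snd ⁻¹' {n₀} : Set (X × ℕ)) ∈ nhds (z₀, n₀) :=
    continuous_snd.continuousAt.preimage_mem_nhds ((isOpen_discrete _).mem_nhds rfl)
  by_cases hcond : n₀.unpair.1 ≠ 0 ∧ u z₀ ∈ T.Sset n₀.unpair.1
  · set m := n₀.unpair.1
    have hU : ((fun q : X × ℕ => u q.1) ⁻¹' (T.Sset m)) ∩ Prod.snd ⁻¹' {n₀}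
        ∈ nhds (z₀, n₀) := by
      apply Filter.inter_mem _ hsnd
      exact ((T.clopen_Sset m).preimage (hu.comp continuous_fst)).isOpen.mem_nhds hcond.2
    have hcont : ContinuousOn (fun q : X × ℕ => (T.t m).c ((T.t m).ψ (u q.1)))
        (((fun q : X × ℕ => u q.1) ⁻¹' (T.Sset m)) ∩ Prod.snd ⁻¹' {n₀}) := by
      apply (T.t m).contc.comp
      · apply (T.t m).contψ.comp ((hu.comp continuous_fst).continuousOn)
        intro q hq
        exact Set.image_mono (T.A_subset_V m) hq.1
      · intro q hq
        exact T.A_subset_V m (T.Sset_spec hq.1).1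
    apply continuousAt_of_eqOn hU hcont
    rintro ⟨z, n⟩ ⟨hz, hn⟩
    have hn' : n = n₀ := hn
    show T.C (T.ptv (u z) n) = (T.t m).c ((T.t m).ψ (u z))
    subst hn'
    rw [ptv, if_pos ⟨hcond.1, hz⟩, C, (T.Sset_spec hz).2.2]
  · by_cases h0 : n₀.unpair.1 = 0
    · apply continuousAt_of_eqOn hsnd
        ((continuous_subtype_val.comp (hu.comp continuous_fst)).continuousOn)
      rintro ⟨z, n⟩ hn
      have hn' : n = n₀ := hn
      subst hn'
      show T.C (T.ptv (u z) n) = ((u z) : G)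
      rw [ptv, if_neg (fun hc => hc.1 h0), T.C_of_unitK (hmem z)]
    · have hnot : u z₀ ∉ T.Sset n₀.unpair.1 := fun hc => hcond ⟨h0, hc⟩
      have hU : ((fun q : X × ℕ => u q.1) ⁻¹' (T.Sset n₀.unpair.1)ᶜ) ∩ Prod.snd ⁻¹' {n₀}
          ∈ nhds (z₀, n₀) :=
        Filter.inter_mem (((T.clopen_Sset _).compl.preimage
          (hu.comp continuous_fst)).isOpen.mem_nhds hnot) hsnd
      apply continuousAt_of_eqOn hU
        ((continuous_subtype_val.comp (hu.comp continuous_fst)).continuousOn)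
      rintro ⟨z, n⟩ ⟨hz, hn⟩
      have hn' : n = n₀ := hn
      subst hn'
      show T.C (T.ptv (u z) n) = ((u z) : G)
      rw [ptv, if_neg (fun hc => hz hc.2), T.C_of_unitK (hmem z)]

open Classical in
theorem continuous_lvl2_comp (u : X → S.units) (hu : Continuous u) :
    Continuous fun q : X × ℕ => T.lvl2 (u q.1) q.2 := by
  classical
  rw [continuous_iff_continuousAt]
  rintro ⟨z₀, n₀⟩
  have hsnd : (Prod.snd ⁻¹' {n₀} : Set (X × ℕ)) ∈ nhds (z₀, n₀) :=
    continuous_snd.continuousAt.preimage_mem_nhds ((isOpen_discrete _).mem_nhds rfl)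
  by_cases hcond : n₀.unpair.1 ≠ 0 ∧ u z₀ ∈ T.Sset n₀.unpair.1
  · have hU : ((fun q : X × ℕ => u q.1) ⁻¹' (T.Sset n₀.unpair.1)) ∩ Prod.snd ⁻¹' {n₀}
        ∈ nhds (z₀, n₀) :=
      Filter.inter_mem (((T.clopen_Sset _).preimage
        (hu.comp continuous_fst)).isOpen.mem_nhds hcond.2) hsnd
    apply continuousAt_of_eqOn hU continuousOn_const
    rintro ⟨z, n⟩ ⟨hz, hn⟩
    have hn' : n = n₀ := hn
    subst hn'
    show T.lvl2 (u z) n = T.lvl2 (u z₀) n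
    rw [lvl2, lvl2, if_pos ⟨hcond.1, hz⟩, if_pos hcond]
  · obtain ⟨W, hWclopen, hWmem, hW⟩ := T.agree_W (u z₀) n₀
    by_cases h0 : n₀.unpair.1 = 0
    · have hU : ((fun q : X × ℕ => u q.1) ⁻¹' W) ∩ Prod.snd ⁻¹' {n₀} ∈ nhds (z₀, n₀) :=
        Filter.inter_mem ((hWclopen.preimage
          (hu.comp continuous_fst)).isOpen.mem_nhds hWmem) hsnd
      apply continuousAt_of_eqOn hU continuousOn_const
      rintro ⟨z, n⟩ ⟨hz, hn⟩
      have hn' : n = n₀ := hn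
      subst hn'
      show T.lvl2 (u z) n = T.lvl2 (u z₀) n
      rw [lvl2, lvl2, if_neg (fun hc => hc.1 h0), if_neg hcond]
      exact count_congr_of_agree fun j hj => hW (u z) hz j (by omega)
    · have hnot : u z₀ ∉ T.Sset n₀.unpair.1 := fun hc => hcond ⟨h0, hc⟩
      have hU : ((fun q : X × ℕ => u q.1) ⁻¹' (W ∩ (T.Sset n₀.unpair.1)ᶜ)) ∩
          Prod.snd ⁻¹' {n₀} ∈ nhds (z₀, n₀) :=
        Filter.inter_mem (((hWclopen.inter (T.clopen_Sset _).compl).preimage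
          (hu.comp continuous_fst)).isOpen.mem_nhds ⟨hWmem, hnot⟩) hsnd
      apply continuousAt_of_eqOn hU continuousOn_const
      rintro ⟨z, n⟩ ⟨hz, hn⟩
      have hn' : n = n₀ := hn
      subst hn'
      show T.lvl2 (u z) n = T.lvl2 (u z₀) n
      rw [lvl2, lvl2, if_neg (fun hc => hz.2 hc.2), if_neg hcond]
      exact count_congr_of_agree fun j hj => hW (u z) hz.1 j (by omega)

end TransSystem
end GroupoidStruct

namespace GroupoidStruct

variable {G : Type u} [TopologicalSpace G] {S : GroupoidStruct G} {K : Set G}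

theorem continuous_mul_of (hS : S.IsAmple) {X : Type v} [TopologicalSpace X]
    {a b : X → G} (ha : Continuous a) (hb : Continuous b)
    (hcomp : ∀ z, S.src (a z) = S.rng (b z)) :
    Continuous fun z => S.mul (a z) (b z) :=
  hS.continuousOn_mul.comp_continuous (ha.prodMk hb) hcomp

namespace TransSystem

variable (T : TransSystem S K)

noncomputable def DD (g : G) : G :=
  S.mul (S.inv (T.C (S.rngMap g))) (S.mul g (T.C (S.srcMap g)))

theorem comp1 (g : G) : S.src g = S.rng (T.C (S.srcMap g)) := by
  rw [T.rng_C, srcMap_val]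

theorem comp2 (g : G) :
    S.src (S.inv (T.C (S.rngMap g))) = S.rng (S.mul g (T.C (S.srcMap g))) := by
  rw [S.src_inv, T.rng_C, S.rng_mul _ _ (T.comp1 g), rngMap_val]

theorem rng_DD (g : G) : S.rng (T.DD g) = S.src (T.C (S.rngMap g)) := by
  rw [DD, S.rng_mul _ _ (T.comp2 g), S.rng_inv]

theorem src_DD (g : G) : S.src (T.DD g) = S.src (T.C (S.srcMap g)) := by
  rw [DD, S.src_mul _ _ (T.comp2 g), S.src_mul _ _ (T.comp1 g)]

theorem rng_DD_mem (g : G) : S.rng (T.DD g) ∈ K := by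
  rw [T.rng_DD g]; exact T.src_C_mem _

theorem src_DD_mem (g : G) : S.src (T.DD g) ∈ K := by
  rw [T.src_DD g]; exact T.src_C_mem _

theorem rngMap_DD (g : G) : S.rngMap (T.DD g) = T.kap (S.rngMap g) :=
  Subtype.ext (T.rng_DD g)

theorem srcMap_DD (g : G) : S.srcMap (T.DD g) = T.kap (S.srcMap g) :=
  Subtype.ext (T.src_DD g)

theorem DD_cancel (g : G) :
    S.mul (T.C (S.rngMap g)) (S.mul (T.DD g) (S.inv (T.C (S.srcMap g)))) = g := by
  have hrCx : S.rng (T.C (S.rngMap g)) = S.rng g := by rw [T.rng_C, rngMap_val]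
  have step1 : S.mul (T.DD g) (S.inv (T.C (S.srcMap g)))
      = S.mul (S.inv (T.C (S.rngMap g))) g := by
    rw [DD, S.mul_assoc _ _ _ (T.comp2 g)
      (by rw [S.src_mul _ _ (T.comp1 g), S.rng_inv])]
    rw [S.mul_mul_inv_cancel (T.comp1 g)]
  rw [step1, S.mul_inv_cancel_left hrCx]

theorem DD_mul {g g' : G} (h : S.src g = S.rng g') :
    T.DD (S.mul g g') = S.mul (T.DD g) (T.DD g') := by
  have hyy' : S.srcMap g = S.rngMap g' := Subtype.ext h
  have hrm : S.rngMap (S.mul g g') = S.rngMap g := Subtype.ext (S.rng_mul _ _ h)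
  have hsm : S.srcMap (S.mul g g') = S.srcMap g' := Subtype.ext (S.src_mul _ _ h)
  have hrq : S.rng (S.mul g' (T.C (S.srcMap g'))) = S.rng g' := S.rng_mul _ _ (T.comp1 g')
  have hinner : S.src (S.inv (T.C (S.srcMap g)))
      = S.rng (S.mul g' (T.C (S.srcMap g'))) := by
    rw [S.src_inv, T.rng_C, hrq, srcMap_val, h]
  have key : S.mul (S.mul g (T.C (S.srcMap g)))
      (S.mul (S.inv (T.C (S.srcMap g))) (S.mul g' (T.C (S.srcMap g'))))
      = S.mul (S.mul g g') (T.C (S.srcMap g')) := by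
    have hsCy : S.rng (T.C (S.srcMap g)) = S.rng (S.mul g' (T.C (S.srcMap g'))) := by
      rw [T.rng_C, hrq, srcMap_val, h]
    rw [S.mul_assoc _ _ _ (T.comp1 g) (by rw [S.rng_mul _ _ hinner, S.rng_inv])]
    rw [S.mul_inv_cancel_left hsCy]
    rw [← S.mul_assoc _ _ _ h (T.comp1 g')]
  calc T.DD (S.mul g g')
      = S.mul (S.inv (T.C (S.rngMap g))) (S.mul (S.mul g g') (T.C (S.srcMap g'))) := by
        rw [DD, hrm, hsm]
    _ = S.mul (S.inv (T.C (S.rngMap g)))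
          (S.mul (S.mul g (T.C (S.srcMap g)))
            (S.mul (S.inv (T.C (S.srcMap g))) (S.mul g' (T.C (S.srcMap g'))))) := by rw [key]
    _ = S.mul (S.mul (S.inv (T.C (S.rngMap g))) (S.mul g (T.C (S.srcMap g))))
          (S.mul (S.inv (T.C (S.srcMap g))) (S.mul g' (T.C (S.srcMap g')))) := by
        rw [S.mul_assoc _ _ _ (T.comp2 g)
          (by rw [S.src_mul _ _ (T.comp1 g), S.rng_mul _ _ hinner, S.rng_inv])]
    _ = S.mul (T.DD g) (T.DD g') := by
        simp only [DD]
        rw [hyy']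

theorem DD_src (g : G) : T.DD (S.src g) = S.src (T.DD g) := by
  have hr : S.rng (T.C (S.srcMap g)) = S.src g := by rw [T.rng_C, srcMap_val]
  rw [DD, rngMap_src, srcMap_src, ← hr, S.rng_mul_self, S.inv_mul, T.src_DD]

theorem DD_rng (g : G) : T.DD (S.rng g) = S.rng (T.DD g) := by
  have hr : S.rng (T.C (S.rngMap g)) = S.rng g := by rw [T.rng_C, rngMap_val]
  rw [DD, rngMap_rng, srcMap_rng, ← hr, S.rng_mul_self, S.inv_mul, T.rng_DD]

theorem DD_inv (g : G) : T.DD (S.inv g) = S.inv (T.DD g) := by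
  rw [show T.DD (S.inv g) = S.mul (S.inv (T.C (S.srcMap g))) (S.mul (S.inv g) (T.C (S.rngMap g)))
    from by rw [DD, rngMap_inv, srcMap_inv]]
  rw [DD, S.inv_mul_rev (T.comp2 g), S.inv_inv, S.inv_mul_rev (T.comp1 g)]
  rw [S.mul_assoc _ _ _ (by rw [S.src_inv, T.rng_C, srcMap_val, S.rng_inv])
    (by rw [S.src_inv, T.rng_C, rngMap_val])]

noncomputable def Psi : G × (ℕ × ℕ) → (S.Restrict K) × (ℕ × ℕ) := fun p =>
  (⟨T.DD p.1, T.rng_DD_mem p.1, T.src_DD_mem p.1⟩,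
   (T.lvl (S.rngMap p.1) p.2.1, T.lvl (S.srcMap p.1) p.2.2))

noncomputable def Psi' : (S.Restrict K) × (ℕ × ℕ) → G × (ℕ × ℕ) := fun q =>
  (S.mul (T.C (T.ptv (S.rngMap q.1.1) q.2.1))
     (S.mul q.1.1 (S.inv (T.C (T.ptv (S.srcMap q.1.1) q.2.2)))),
   (T.lvl2 (S.rngMap q.1.1) q.2.1, T.lvl2 (S.srcMap q.1.1) q.2.2))

theorem left_inv (p : G × (ℕ × ℕ)) : T.Psi' (T.Psi p) = p := by
  obtain ⟨g, i, j⟩ := p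
  have h1 := T.ptv_lvl (S.rngMap g) i
  have h2 := T.ptv_lvl (S.srcMap g) j
  show (S.mul (T.C (T.ptv (S.rngMap (T.DD g)) (T.lvl (S.rngMap g) i)))
     (S.mul (T.DD g) (S.inv (T.C (T.ptv (S.srcMap (T.DD g)) (T.lvl (S.srcMap g) j))))),
   (T.lvl2 (S.rngMap (T.DD g)) (T.lvl (S.rngMap g) i),
    T.lvl2 (S.srcMap (T.DD g)) (T.lvl (S.srcMap g) j))) = (g, (i, j))
  rw [T.rngMap_DD, T.srcMap_DD, h1.1, h1.2, h2.1, h2.2, T.DD_cancel]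

theorem transport_back (h1 : G) (x₀ y₀ : S.units)
    (srcCx : S.src (T.C x₀) = S.rng h1) (srcCy : S.src (T.C y₀) = S.src h1) :
    S.rngMap (S.mul (T.C x₀) (S.mul h1 (S.inv (T.C y₀)))) = x₀ ∧
    S.srcMap (S.mul (T.C x₀) (S.mul h1 (S.inv (T.C y₀)))) = y₀ ∧
    T.DD (S.mul (T.C x₀) (S.mul h1 (S.inv (T.C y₀)))) = h1 := by
  have compInner : S.src h1 = S.rng (S.inv (T.C y₀)) := by rw [S.rng_inv, srcCy]
  have compOuter : S.src (T.C x₀) = S.rng (S.mul h1 (S.inv (T.C y₀))) := by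
    rw [S.rng_mul _ _ compInner, srcCx]
  have rng_g : S.rng (S.mul (T.C x₀) (S.mul h1 (S.inv (T.C y₀)))) = x₀.1 := by
    rw [S.rng_mul _ _ compOuter, T.rng_C]
  have src_g : S.src (S.mul (T.C x₀) (S.mul h1 (S.inv (T.C y₀)))) = y₀.1 := by
    rw [S.src_mul _ _ compOuter, S.src_mul _ _ compInner, S.src_inv, T.rng_C]
  have rmg : S.rngMap (S.mul (T.C x₀) (S.mul h1 (S.inv (T.C y₀)))) = x₀ := Subtype.ext rng_g
  have smg : S.srcMap (S.mul (T.C x₀) (S.mul h1 (S.inv (T.C y₀)))) = y₀ := Subtype.ext src_g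
  refine ⟨rmg, smg, ?_⟩
  rw [DD, rmg, smg]
  have hQ : S.src (S.mul h1 (S.inv (T.C y₀))) = S.rng (T.C y₀) := by
    rw [S.src_mul _ _ compInner, S.src_inv]
  have hstep : S.mul (S.mul (T.C x₀) (S.mul h1 (S.inv (T.C y₀)))) (T.C y₀)
      = S.mul (T.C x₀) h1 := by
    rw [S.mul_assoc _ _ _ compOuter hQ, S.mul_inv_mul_cancel srcCy.symm]
  rw [hstep, S.inv_mul_cancel_left srcCx]

theorem right_inv (q : (S.Restrict K) × (ℕ × ℕ)) : T.Psi (T.Psi' q) = q := by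
  obtain ⟨h, p1, p2⟩ := q
  have hk : (S.rngMap h.1).1 ∈ K := h.2.1
  have hk' : (S.srcMap h.1).1 ∈ K := h.2.2
  have H1 := T.kap_ptv hk p1
  have H2 := T.kap_ptv hk' p2
  have srcCx : S.src (T.C (T.ptv (S.rngMap h.1) p1)) = S.rng h.1 := congrArg Subtype.val H1.1
  have srcCy : S.src (T.C (T.ptv (S.srcMap h.1) p2)) = S.src h.1 := congrArg Subtype.val H2.1
  obtain ⟨rmg, smg, hval⟩ := T.transport_back h.1 _ _ srcCx srcCy
  refine Prod.ext_iff.mpr ⟨Subtype.ext ?_, Prod.ext_iff.mpr ⟨?_, ?_⟩⟩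
  · show T.DD (S.mul (T.C (T.ptv (S.rngMap h.1) p1))
      (S.mul h.1 (S.inv (T.C (T.ptv (S.srcMap h.1) p2))))) = h.1
    exact hval
  · show T.lvl (S.rngMap (S.mul (T.C (T.ptv (S.rngMap h.1) p1))
      (S.mul h.1 (S.inv (T.C (T.ptv (S.srcMap h.1) p2))))))
      (T.lvl2 (S.rngMap h.1) p1) = p1
    rw [rmg]
    exact H1.2
  · show T.lvl (S.srcMap (S.mul (T.C (T.ptv (S.rngMap h.1) p1))
      (S.mul h.1 (S.inv (T.C (T.ptv (S.srcMap h.1) p2))))))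
      (T.lvl2 (S.srcMap h.1) p2) = p2
    rw [smg]
    exact H2.2

end TransSystem
end GroupoidStruct

namespace GroupoidStruct

variable {G : Type u} [TopologicalSpace G] {S : GroupoidStruct G} {K : Set G}

namespace TransSystem

variable (T : TransSystem S K)

theorem continuous_DD (hS : S.IsAmple) : Continuous T.DD := by
  have hCr : Continuous fun g => T.C (S.rngMap g) :=
    T.continuous_C_comp _ hS.continuous_rngMap
  have hCs : Continuous fun g => T.C (S.srcMap g) :=
    T.continuous_C_comp _ hS.continuous_srcMap
  exact continuous_mul_of hS (hS.continuous_inv.comp hCr)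
    (continuous_mul_of hS continuous_id hCs fun g => T.comp1 g) fun g => T.comp2 g

theorem continuous_Psi (hS : S.IsAmple) : Continuous T.Psi := by
  have h1 : Continuous fun p : G × (ℕ × ℕ) =>
      (⟨T.DD p.1, T.rng_DD_mem p.1, T.src_DD_mem p.1⟩ : S.Restrict K) :=
    Continuous.subtype_mk ((T.continuous_DD hS).comp continuous_fst) _
  have h2 : Continuous fun p : G × (ℕ × ℕ) => T.lvl (S.rngMap p.1) p.2.1 :=
    (T.continuous_lvl_comp _ hS.continuous_rngMap).comp
      (continuous_fst.prodMk (continuous_fst.comp continuous_snd))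
  have h3 : Continuous fun p : G × (ℕ × ℕ) => T.lvl (S.srcMap p.1) p.2.2 :=
    (T.continuous_lvl_comp _ hS.continuous_srcMap).comp
      (continuous_fst.prodMk (continuous_snd.comp continuous_snd))
  exact h1.prodMk (h2.prodMk h3)

set_option maxHeartbeats 2000000 in
theorem continuous_Psi' (hS : S.IsAmple) : Continuous T.Psi' := by
  have hval : Continuous fun q : (S.Restrict K) × (ℕ × ℕ) => q.1.1 :=
    continuous_subtype_val.comp continuous_fst
  have hr : Continuous fun q : (S.Restrict K) × (ℕ × ℕ) => S.rngMap q.1.1 :=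
    hS.continuous_rngMap.comp hval
  have hs : Continuous fun q : (S.Restrict K) × (ℕ × ℕ) => S.srcMap q.1.1 :=
    hS.continuous_srcMap.comp hval
  have hmemr : ∀ q : (S.Restrict K) × (ℕ × ℕ), (S.rngMap q.1.1).1 ∈ K := fun q => q.1.2.1
  have hmems : ∀ q : (S.Restrict K) × (ℕ × ℕ), (S.srcMap q.1.1).1 ∈ K := fun q => q.1.2.2
  have hC2r : Continuous fun q : (S.Restrict K) × (ℕ × ℕ) =>
      T.C (T.ptv (S.rngMap q.1.1) q.2.1) :=
    (T.continuous_C2_comp _ hr hmemr).comp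
      (continuous_id.prodMk (continuous_fst.comp continuous_snd))
  have hC2s : Continuous fun q : (S.Restrict K) × (ℕ × ℕ) =>
      T.C (T.ptv (S.srcMap q.1.1) q.2.2) :=
    (T.continuous_C2_comp _ hs hmems).comp
      (continuous_id.prodMk (continuous_snd.comp continuous_snd))
  have e1 : ∀ q : (S.Restrict K) × (ℕ × ℕ),
      S.src (T.C (T.ptv (S.rngMap q.1.1) q.2.1)) = S.rng q.1.1 :=
    fun q => congrArg Subtype.val (T.kap_ptv (hmemr q) q.2.1).1
  have e2 : ∀ q : (S.Restrict K) × (ℕ × ℕ),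
      S.src (T.C (T.ptv (S.srcMap q.1.1) q.2.2)) = S.src q.1.1 :=
    fun q => congrArg Subtype.val (T.kap_ptv (hmems q) q.2.2).1
  have hinner : ∀ q : (S.Restrict K) × (ℕ × ℕ),
      S.src q.1.1 = S.rng (S.inv (T.C (T.ptv (S.srcMap q.1.1) q.2.2))) := by
    intro q; rw [S.rng_inv, e2]
  have houter : ∀ q : (S.Restrict K) × (ℕ × ℕ),
      S.src (T.C (T.ptv (S.rngMap q.1.1) q.2.1))
        = S.rng (S.mul q.1.1 (S.inv (T.C (T.ptv (S.srcMap q.1.1) q.2.2)))) := by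
    intro q; rw [S.rng_mul _ _ (hinner q), e1]
  have hvalc : Continuous fun q : (S.Restrict K) × (ℕ × ℕ) =>
      S.mul (T.C (T.ptv (S.rngMap q.1.1) q.2.1))
        (S.mul q.1.1 (S.inv (T.C (T.ptv (S.srcMap q.1.1) q.2.2)))) :=
    continuous_mul_of hS hC2r
      (continuous_mul_of hS hval (hS.continuous_inv.comp hC2s) hinner) houter
  have i1 : Continuous fun q : (S.Restrict K) × (ℕ × ℕ) => T.lvl2 (S.rngMap q.1.1) q.2.1 :=
    (T.continuous_lvl2_comp _ hr).comp
      (continuous_id.prodMk (continuous_fst.comp continuous_snd))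
  have i2 : Continuous fun q : (S.Restrict K) × (ℕ × ℕ) => T.lvl2 (S.srcMap q.1.1) q.2.2 :=
    (T.continuous_lvl2_comp _ hs).comp
      (continuous_id.prodMk (continuous_snd.comp continuous_snd))
  exact hvalc.prodMk (i1.prodMk i2)

end TransSystem
end GroupoidStruct

open GroupoidStruct in
/-- For an ample groupoid with σ-compact unit space and a clopen `G`-full `K ⊆ G⁰`,
`G × ℛ ≅ G|_K × ℛ` as topological groupoids. -/
theorem prod_Rho_iso_restrict_prod_Rho
    {G : Type u} [TopologicalSpace G] (S : GroupoidStruct G)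
    (hS : S.IsAmple) (hc : IsSigmaCompact S.units)
    {K : Set G} (hK : S.IsUnitClopen K) (hKf : S.IsFull K) :
    Nonempty (GroupoidIso (S.prod Rho) ((S.restrict K).prod Rho)) := by
  obtain ⟨T⟩ := exists_transSystem hS hc hK hKf
  refine ⟨{ toEquiv := ⟨T.Psi, T.Psi', T.left_inv, T.right_inv⟩,
            continuous_toFun := T.continuous_Psi hS,
            continuous_invFun := T.continuous_Psi' hS,
            map_mul := ?_, map_inv := ?_, map_src := ?_, map_rng := ?_ }⟩
  · intro a b hab
    have h1 : S.src a.1 = S.rng b.1 := congrArg Prod.fst hab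
    refine Prod.ext_iff.mpr ⟨Subtype.ext ?_, ?_⟩
    · show T.DD (S.mul a.1 b.1) = (S.rmul K (T.Psi a).1 (T.Psi b).1).1
      have hcomp : S.src (T.DD a.1) = S.rng (T.DD b.1) := by
        rw [T.src_DD, T.rng_DD, show S.srcMap a.1 = S.rngMap b.1 from Subtype.ext h1]
      rw [S.rmul_val K _ _ hcomp]
      exact T.DD_mul h1
    · show (T.lvl (S.rngMap (S.mul a.1 b.1)) a.2.1, T.lvl (S.srcMap (S.mul a.1 b.1)) b.2.2)
          = (T.lvl (S.rngMap a.1) a.2.1, T.lvl (S.srcMap b.1) b.2.2)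
      rw [show S.rngMap (S.mul a.1 b.1) = S.rngMap a.1 from Subtype.ext (S.rng_mul _ _ h1),
          show S.srcMap (S.mul a.1 b.1) = S.srcMap b.1 from Subtype.ext (S.src_mul _ _ h1)]
  · intro a
    refine Prod.ext_iff.mpr ⟨Subtype.ext ?_, ?_⟩
    · exact T.DD_inv a.1
    · show (T.lvl (S.rngMap (S.inv a.1)) a.2.2, T.lvl (S.srcMap (S.inv a.1)) a.2.1)
          = (T.lvl (S.srcMap a.1) a.2.2, T.lvl (S.rngMap a.1) a.2.1)
      rw [rngMap_inv, srcMap_inv]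
  · intro a
    refine Prod.ext_iff.mpr ⟨Subtype.ext ?_, ?_⟩
    · exact T.DD_src a.1
    · show (T.lvl (S.rngMap (S.src a.1)) a.2.2, T.lvl (S.srcMap (S.src a.1)) a.2.2)
          = (T.lvl (S.srcMap a.1) a.2.2, T.lvl (S.srcMap a.1) a.2.2)
      rw [rngMap_src, srcMap_src]
  · intro a
    refine Prod.ext_iff.mpr ⟨Subtype.ext ?_, ?_⟩
    · exact T.DD_rng a.1
    · show (T.lvl (S.rngMap (S.rng a.1)) a.2.1, T.lvl (S.srcMap (S.rng a.1)) a.2.1)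
          = (T.lvl (S.rngMap a.1) a.2.1, T.lvl (S.rngMap a.1) a.2.1)
      rw [rngMap_rng, srcMap_rng]
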